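/- arXiv:1806.10324 — 3 statements merged into one kernel-verified Lean document; each statement's English description precedes it below -/
import Mathlib

section
/- If a quantum channel N(ρ) = Σᵢ Eᵢ ρ Eᵢ† on a finite-dimensional Hilbert space fixes a †-subalgebra B in the Heisenberg picture (i.e., Σᵢ Eᵢ† B Eᵢ = B for all B ∈ B), then every Kraus operator Eᵢ commutes with every element of B. -/
open Matrix BigOperators

/-- If a channel `N(ρ) = ∑ i, E i * ρ * (E i)ᴴ` on a finite-dimensional Hilbert space
fixes a unital `*`-subalgebra `B` in the Heisenberg picture, then every Kraus operator
commutes with every element of `B`. -/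
theorem kraus_commute_of_fixes_algebra {n k : ℕ}
    (B : StarSubalgebra ℂ (Matrix (Fin n) (Fin n) ℂ))
    (E : Fin k → Matrix (Fin n) (Fin n) ℂ)
    (htp : ∑ i, (E i)ᴴ * E i = 1)
    (hfix : ∀ X ∈ B, ∑ i, (E i)ᴴ * X * E i = X) :
    ∀ i, ∀ X ∈ B, E i * X = X * E i := by
  intro i X hX
  set C : Fin k → Matrix (Fin n) (Fin n) ℂ := fun j => E j * X - X * E j with hC
  have hXs : Xᴴ ∈ B := star_mem hX
  have hXX : Xᴴ * X ∈ B := mul_mem hXs hX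
  have key : ∑ j, (C j)ᴴ * C j = 0 := by
    have expand : ∀ j, (C j)ᴴ * C j =
        Xᴴ * ((E j)ᴴ * E j) * X - Xᴴ * ((E j)ᴴ * X * E j)
          - ((E j)ᴴ * Xᴴ * E j) * X + (E j)ᴴ * (Xᴴ * X) * E j := by
      intro j
      simp only [hC, conjTranspose_sub, conjTranspose_mul]
      noncomm_ring
    calc ∑ j, (C j)ᴴ * C j
        = Xᴴ * (∑ j, (E j)ᴴ * E j) * X - Xᴴ * (∑ j, (E j)ᴴ * X * E j)
          - (∑ j, (E j)ᴴ * Xᴴ * E j) * X + ∑ j, (E j)ᴴ * (Xᴴ * X) * E j := by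
          simp only [expand, Finset.sum_add_distrib, Finset.sum_sub_distrib,
            Finset.mul_sum, Finset.sum_mul]
      _ = 0 := by
          rw [htp, hfix X hX, hfix Xᴴ hXs]
          have := hfix (Xᴴ * X) hXX
          simp only [← mul_assoc] at this ⊢
          rw [this]; simp
  -- take traces
  have tr : ∑ j, (∑ a, ∑ b, (Complex.normSq (C j b a) : ℝ)) = 0 := by
    have h1 : ∀ j, ((∑ a, ∑ b, (Complex.normSq (C j b a) : ℝ) : ℝ) : ℂ)
        = ((C j)ᴴ * (C j)).trace := by
      intro j
      simp only [trace, diag, mul_apply, conjTranspose_apply, Complex.star_def]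
      rw [Complex.ofReal_sum]
      refine Finset.sum_congr rfl fun a _ => ?_
      rw [Complex.ofReal_sum]
      refine Finset.sum_congr rfl fun b _ => ?_
      rw [mul_comm, Complex.mul_conj]
    have h2 : ((∑ j, ∑ a, ∑ b, (Complex.normSq (C j b a) : ℝ) : ℝ) : ℂ) = 0 := by
      rw [Complex.ofReal_sum]
      simp_rw [h1]
      rw [← trace_sum, key, trace_zero]
    exact_mod_cast h2
  have hz : ∀ j, ∑ a, ∑ b, (Complex.normSq (C j b a) : ℝ) = 0 := by
    have := (Finset.sum_eq_zero_iff_of_nonneg (fun j _ =>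
      Finset.sum_nonneg fun a _ => Finset.sum_nonneg fun b _ =>
        Complex.normSq_nonneg _)).mp tr
    exact fun j => this j (Finset.mem_univ j)
  have hCzero : C i = 0 := by
    ext a b
    have h1 := (Finset.sum_eq_zero_iff_of_nonneg (fun a _ =>
      Finset.sum_nonneg fun b _ => Complex.normSq_nonneg _)).mp (hz i) b (Finset.mem_univ b)
    have h2 := (Finset.sum_eq_zero_iff_of_nonneg (fun b _ =>
      Complex.normSq_nonneg _)).mp h1 a (Finset.mem_univ a)
    simpa [Complex.normSq_eq_zero] using h2
  have := sub_eq_zero.mp hCzero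
  simpa [hC] using this
end

section
/- Let P be an orthogonal projection on a finite-dimensional Hilbert space and let E₁,…,E_k satisfy Σᵢ Eᵢ† Eᵢ = 1. If Σᵢ Eᵢ† P Eᵢ = P and Σᵢ Eᵢ† (1−P) Eᵢ = 1−P, then P Eᵢ = Eᵢ P for all i. -/
open Matrix BigOperators

/-- If a finite sum of matrices of the form `Aᴴ * A` vanishes, each `A` vanishes. -/
lemma sum_conjTranspose_mul_self_eq_zero' {n k : ℕ}
    (A : Fin k → Matrix (Fin n) (Fin n) ℂ)
    (h : ∑ i, (A i)ᴴ * A i = 0) : ∀ i, A i = 0 := by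
  have hdiag := congrArg (fun M : Matrix (Fin n) (Fin n) ℂ => ∑ j, M j j) h
  simp only [Matrix.sum_apply, Matrix.mul_apply, Matrix.conjTranspose_apply,
    Matrix.zero_apply, Finset.sum_const_zero] at hdiag
  have hns : ∀ (z : ℂ), star z * z = (Complex.normSq z : ℂ) := by
    intro z; rw [Complex.star_def, Complex.normSq_eq_conj_mul_self]
  simp only [hns] at hdiag
  have hreal : ∑ i, ∑ j, ∑ l, Complex.normSq (A i l j) = 0 := by
    have : ((∑ i, ∑ j, ∑ l, Complex.normSq (A i l j) : ℝ) : ℂ) = 0 := by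
      push_cast
      rw [← hdiag]
      rw [Finset.sum_comm]
    exact_mod_cast this
  have hzero : ∀ i ∈ Finset.univ, ∑ j, ∑ l, Complex.normSq (A i l j) = 0 := by
    rw [← Finset.sum_eq_zero_iff_of_nonneg]
    · exact hreal
    · intro i _
      exact Finset.sum_nonneg fun j _ => Finset.sum_nonneg fun l _ => Complex.normSq_nonneg _
  intro i
  ext l j
  have h1 := hzero i (Finset.mem_univ i)
  rw [Finset.sum_eq_zero_iff_of_nonneg
    (fun j _ => Finset.sum_nonneg fun l _ => Complex.normSq_nonneg _)] at h1
  have h2 := h1 j (Finset.mem_univ j)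
  rw [Finset.sum_eq_zero_iff_of_nonneg (fun l _ => Complex.normSq_nonneg _)] at h2
  have := h2 l (Finset.mem_univ l)
  simpa [Complex.normSq_eq_zero] using this

/-- If a trace-preserving Kraus family fixes an orthogonal projection `P` and its
complement `1 - P` in the Heisenberg picture, then every Kraus operator commutes
with `P`. -/
theorem kraus_commute_of_fixes_projection {n k : ℕ}
    (P : Matrix (Fin n) (Fin n) ℂ) (hP : P * P = P) (hPsa : Pᴴ = P)
    (E : Fin k → Matrix (Fin n) (Fin n) ℂ)
    (htp : ∑ i, (E i)ᴴ * E i = 1)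
    (hfixP : ∑ i, (E i)ᴴ * P * E i = P)
    (hfixPc : ∑ i, (E i)ᴴ * (1 - P) * E i = 1 - P) :
    ∀ i, P * E i = E i * P := by
  have hQsa : (1 - P)ᴴ = 1 - P := by
    rw [Matrix.conjTranspose_sub, Matrix.conjTranspose_one, hPsa]
  -- (1-P) E i P = 0
  have hsum1 : ∑ i, ((1 - P) * E i * P)ᴴ * ((1 - P) * E i * P) = 0 := by
    have : ∀ i, ((1 - P) * E i * P)ᴴ * ((1 - P) * E i * P)
        = P * ((E i)ᴴ * (1 - P) * E i) * P := by
      intro i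
      simp only [Matrix.conjTranspose_mul, hPsa, hQsa]
      have hQQ : (1 - P) * (1 - P) = 1 - P := by
        noncomm_ring [hP]
      calc P * ((E i)ᴴ * (1 - P)) * ((1 - P) * E i * P)
          = P * ((E i)ᴴ * ((1 - P) * (1 - P)) * E i) * P := by noncomm_ring
        _ = P * ((E i)ᴴ * (1 - P) * E i) * P := by rw [hQQ]
    rw [Finset.sum_congr rfl fun i _ => this i, ← Finset.sum_mul, ← Finset.mul_sum, hfixPc]
    noncomm_ring [hP]
  have h1 := sum_conjTranspose_mul_self_eq_zero' _ hsum1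
  -- P E i (1-P) = 0
  have hsum2 : ∑ i, (P * E i * (1 - P))ᴴ * (P * E i * (1 - P)) = 0 := by
    have : ∀ i, (P * E i * (1 - P))ᴴ * (P * E i * (1 - P))
        = (1 - P) * ((E i)ᴴ * P * E i) * (1 - P) := by
      intro i
      simp only [Matrix.conjTranspose_mul, hPsa, hQsa]
      calc (1 - P) * ((E i)ᴴ * P) * (P * E i * (1 - P))
          = (1 - P) * ((E i)ᴴ * (P * P) * E i) * (1 - P) := by noncomm_ring
        _ = (1 - P) * ((E i)ᴴ * P * E i) * (1 - P) := by rw [hP]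
    rw [Finset.sum_congr rfl fun i _ => this i, ← Finset.sum_mul, ← Finset.mul_sum, hfixP]
    noncomm_ring [hP]
  have h2 := sum_conjTranspose_mul_self_eq_zero' _ hsum2
  intro i
  have e1 := h1 i
  have e2 := h2 i
  have e1' : E i * P = P * E i * P := by
    have : (1 - P) * E i * P = E i * P - P * (E i * P) := by noncomm_ring
    rw [this] at e1
    rw [sub_eq_zero] at e1
    rw [e1]; noncomm_ring
  have e2' : P * E i = P * E i * P := by
    have : P * E i * (1 - P) = P * E i - P * E i * P := by noncomm_ring
    rw [this] at e2
    rw [sub_eq_zero] at e2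
    exact e2
  rw [e2', e1']
end

section
/- If a channel's Heisenberg adjoint N† fixes a *-algebra B pointwise, then N†(AB) = N†(A)·B for all operators A and all B ∈ B (the extension/bimodule property). -/
open Matrix BigOperators

/-- If the Heisenberg adjoint `N†(X) = ∑ i, Eᵢᴴ X Eᵢ` of a channel fixes a
`*`-algebra `B` pointwise, then `N†(A·B) = N†(A)·B` for every operator `A` and
every `B ∈ B` (the bimodule / extension property). -/
theorem heisenberg_bimodule_property {n k : ℕ}
    (B : StarSubalgebra ℂ (Matrix (Fin n) (Fin n) ℂ))
    (E : Fin k → Matrix (Fin n) (Fin n) ℂ)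
    (htp : ∑ i, (E i)ᴴ * E i = 1)
    (hfix : ∀ X ∈ B, ∑ i, (E i)ᴴ * X * E i = X) :
    ∀ A : Matrix (Fin n) (Fin n) ℂ, ∀ X ∈ B,
      ∑ i, (E i)ᴴ * (A * X) * E i = (∑ i, (E i)ᴴ * A * E i) * X := by
  intro A X hX
  have h1 := hfix X hX
  have h2 : ∑ i, (E i)ᴴ * Xᴴ * E i = Xᴴ := by
    have := hfix (star X) (star_mem hX)
    simpa [Matrix.star_eq_conjTranspose] using this
  have h3 : ∑ i, (E i)ᴴ * (Xᴴ * X) * E i = Xᴴ * X := by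
    have := hfix (star X * X) (mul_mem (star_mem hX) hX)
    simpa [Matrix.star_eq_conjTranspose] using this
  have key : ∑ i, (E i * X - X * E i)ᴴ * (E i * X - X * E i) = 0 := by
    have expand : ∀ i, (E i * X - X * E i)ᴴ * (E i * X - X * E i)
        = Xᴴ * ((E i)ᴴ * E i) * X - Xᴴ * ((E i)ᴴ * X * E i)
          - ((E i)ᴴ * Xᴴ * E i) * X + (E i)ᴴ * (Xᴴ * X) * E i := by
      intro i
      simp only [Matrix.conjTranspose_sub, Matrix.conjTranspose_mul]
      noncomm_ring
    calc ∑ i, (E i * X - X * E i)ᴴ * (E i * X - X * E i)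
        = (∑ i, Xᴴ * ((E i)ᴴ * E i) * X) - (∑ i, Xᴴ * ((E i)ᴴ * X * E i))
          - (∑ i, ((E i)ᴴ * Xᴴ * E i) * X) + ∑ i, (E i)ᴴ * (Xᴴ * X) * E i := by
          simp only [expand, Finset.sum_add_distrib, Finset.sum_sub_distrib]
      _ = Xᴴ * (∑ i, (E i)ᴴ * E i) * X - Xᴴ * (∑ i, (E i)ᴴ * X * E i)
          - (∑ i, (E i)ᴴ * Xᴴ * E i) * X + Xᴴ * X := by
          rw [h3]; simp only [Finset.mul_sum, Finset.sum_mul]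
      _ = 0 := by rw [htp, h1, h2]; simp
  have hcomm : ∀ i, E i * X = X * E i := by
    intro i0
    have hM : E i0 * X - X * E i0 = 0 := by
      ext l j
      have hkey := congrFun (congrFun key j) j
      simp only [Matrix.sum_apply, Matrix.mul_apply, Matrix.conjTranspose_apply,
        Matrix.zero_apply] at hkey
      have hcast : ∑ i, ∑ l', (Complex.normSq ((E i * X - X * E i) l' j) : ℂ) = 0 := by
        rw [← hkey]
        refine Finset.sum_congr rfl fun i _ => Finset.sum_congr rfl fun l' _ => ?_
        rw [Complex.normSq_eq_conj_mul_self]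
        rfl
      have hreal : ∑ i, ∑ l', Complex.normSq ((E i * X - X * E i) l' j) = 0 := by
        exact_mod_cast hcast
      have hnn : ∀ i ∈ Finset.univ, (0:ℝ) ≤ ∑ l', Complex.normSq ((E i * X - X * E i) l' j) :=
        fun i _ => Finset.sum_nonneg fun l' _ => Complex.normSq_nonneg _
      have hterm := (Finset.sum_eq_zero_iff_of_nonneg hnn).mp hreal i0 (Finset.mem_univ _)
      have hnn' : ∀ l' ∈ Finset.univ, (0:ℝ) ≤ Complex.normSq ((E i0 * X - X * E i0) l' j) :=
        fun l' _ => Complex.normSq_nonneg _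
      have := (Finset.sum_eq_zero_iff_of_nonneg hnn').mp hterm l (Finset.mem_univ _)
      simpa [Complex.normSq_eq_zero] using this
    have := sub_eq_zero.mp hM
    exact this
  calc ∑ i, (E i)ᴴ * (A * X) * E i
      = ∑ i, (E i)ᴴ * A * E i * X := by
        refine Finset.sum_congr rfl fun i _ => ?_
        simp only [Matrix.mul_assoc]; rw [hcomm i]
    _ = (∑ i, (E i)ᴴ * A * E i) * X := by rw [Finset.sum_mul]
end
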